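/- A simplicial complex $X \subseteq \binom{[n]}{k}$ is a matroid if and only if its barycentric subdivision $\mathcal{B}(X) := \{(x_{\sigma(1)}, \ldots, x_{\sigma(k)}) : \{x_1, \ldots, x_k\} \in X, \sigma \in S_k\} \subseteq \mathrm{Conf}_k([n])$ is a Coxeter matroid for the symmetric group $S_n$ with respect to the parabolic quotient $S_n^{[n-1] \setminus [k]}$. -/

import Mathlib

/-- The Gale (Bruhat) order on finite subsets of a linear order:
componentwise comparison of the increasing enumerations. -/
def GaleLE {α : Type*} [LinearOrder α] (x y : Finset α) : Prop :=
  ∀ i (hx : i < (x.sort (· ≤ ·)).length) (hy : i < (y.sort (· ≤ ·)).length),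
    (x.sort (· ≤ ·)).get ⟨i, hx⟩ ≤ (y.sort (· ≤ ·)).get ⟨i, hy⟩

/-- `P^{(i)}(y)`: the set of the first `i` entries of the tuple `y`. -/
def Pset {n k : ℕ} (y : Fin k → Fin n) (i : ℕ) : Finset (Fin n) :=
  (Finset.univ.filter (fun j : Fin k => (j : ℕ) < i)).image y

/-- The Bruhat order on `Conf_k([n])`, the injective `k`-tuples from `[n]`
(identified with the parabolic quotient `S_n^{[n-1]∖[k]}`): `x ≤ y` iff
`P^{(i)}(x) ≤ P^{(i)}(y)` in the Gale order for all `i ∈ [k]`. -/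
def BruhatLE {n k : ℕ} (x y : Fin k → Fin n) : Prop :=
  ∀ i, 1 ≤ i → i ≤ k → GaleLE (Pset x i) (Pset y i)

/-- `Y ⊆ Conf_k([n]) ≃ S_n^{[n-1]∖[k]}` is a Coxeter matroid if for every
`w ∈ S_n` the set `{P^J(w·y) : y ∈ Y}` (i.e. `{w ∘ y : y ∈ Y}` under the
identification) has a unique maximum in the Bruhat order. -/
def IsCoxeterMatroid {n k : ℕ} (Y : Set (Fin k → Fin n)) : Prop :=
  ∀ w : Equiv.Perm (Fin n),
    ∃! m, m ∈ (fun y => w ∘ y) '' Y ∧ ∀ z ∈ (fun y => w ∘ y) '' Y, BruhatLE z m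

/-- The basis exchange property. -/
def ExchangeProp {n : ℕ} (X : Set (Finset (Fin n))) : Prop :=
  ∀ A ∈ X, ∀ B ∈ X, ∀ a ∈ A \ B, ∃ b ∈ B \ A, (A \ {a}) ∪ {b} ∈ X

/-- The barycentric subdivision `𝓑(X) ⊆ Conf_k([n])` of a pure simplicial
complex `X` of `k`-subsets of `[n]`: all injective `k`-tuples whose underlying
set is a facet of `X`, i.e. all reorderings of the facets. -/
def Bary {n : ℕ} (k : ℕ) (X : Set (Finset (Fin n))) : Set (Fin k → Fin n) :=
  {y | Function.Injective y ∧ Finset.image y Finset.univ ∈ X}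


section Aux
open Finset

-- top count
def Nc {n : ℕ} (t : Fin n) (P : Finset (Fin n)) : ℕ := (P.filter (fun x => t ≤ x)).card

lemma card_filter_le_val (k m : ℕ) :
    (Finset.univ.filter fun j : Fin k => m ≤ (j : ℕ)).card = k - m := by
  have h : (Finset.univ.filter fun j : Fin k => m ≤ (j : ℕ)).image Fin.val = Finset.Ico m k := by
    ext x
    simp only [Finset.mem_image, Finset.mem_filter, Finset.mem_univ, true_and, Finset.mem_Ico]
    constructor
    · rintro ⟨j, hj, rfl⟩; exact ⟨hj, j.2⟩
    · rintro ⟨h1, h2⟩; exact ⟨⟨x, h2⟩, h1, rfl⟩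
  calc (Finset.univ.filter fun j : Fin k => m ≤ (j : ℕ)).card
      = ((Finset.univ.filter fun j : Fin k => m ≤ (j : ℕ)).image Fin.val).card :=
        (Finset.card_image_of_injective _ Fin.val_injective).symm
    _ = (Finset.Ico m k).card := by rw [h]
    _ = k - m := Nat.card_Ico m k

lemma upset_mem_iff {k : ℕ} (U : Finset (Fin k))
    (hU : ∀ ⦃a b : Fin k⦄, a ∈ U → a ≤ b → b ∈ U) (a : Fin k) :
    a ∈ U ↔ k - U.card ≤ (a : ℕ) := by
  constructor
  · intro ha
    have hsub : (Finset.univ.filter fun j : Fin k => (a : ℕ) ≤ (j : ℕ)) ⊆ U := by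
      intro b hb
      simp only [Finset.mem_filter, Finset.mem_univ, true_and] at hb
      exact hU ha (by exact_mod_cast hb)
    have := Finset.card_le_card hsub
    rw [card_filter_le_val] at this
    have := a.2
    omega
  · intro h
    by_contra ha
    have hsub : U ⊆ Finset.univ.filter fun j : Fin k => (a : ℕ) + 1 ≤ (j : ℕ) := by
      intro b hb
      simp only [Finset.mem_filter, Finset.mem_univ, true_and]
      by_contra hba
      have hba' : (b : ℕ) ≤ (a : ℕ) := by omega
      exact ha (hU hb hba')
    have := Finset.card_le_card hsub
    rw [card_filter_le_val] at this
    have := a.2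
    omega

lemma card_filter_le_orderEmbOfFin {n k : ℕ} (P : Finset (Fin n)) (h : P.card = k) (t : Fin n) :
    (Finset.univ.filter fun j : Fin k => t ≤ P.orderEmbOfFin h j).card = Nc t P := by
  apply Finset.card_nbij (fun j => P.orderEmbOfFin h j)
  · intro j hj
    simp only [Finset.mem_filter, Finset.mem_univ, true_and] at hj ⊢
    exact Finset.mem_filter.mpr ⟨Finset.orderEmbOfFin_mem P h j, by simpa using hj⟩
  · exact (P.orderEmbOfFin h).injective.injOn
  · intro x hx
    simp only [Finset.coe_filter, Set.mem_setOf_eq, Finset.mem_filter] at hx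
    obtain ⟨hxP, hxt⟩ := hx
    refine ⟨(P.orderIsoOfFin h).symm ⟨x, hxP⟩, ?_, ?_⟩
    · have heq : P.orderEmbOfFin h ((P.orderIsoOfFin h).symm ⟨x, hxP⟩) = x := by
        rw [← Finset.coe_orderIsoOfFin_apply]
        simp
      simp only [Finset.coe_filter, Set.mem_setOf_eq, Finset.mem_univ, true_and, heq]
      exact hxt
    · show P.orderEmbOfFin h _ = x
      rw [← Finset.coe_orderIsoOfFin_apply]
      simp

-- Key lemma: position vs count
lemma le_orderEmbOfFin_iff {n k : ℕ} (P : Finset (Fin n)) (h : P.card = k) (t : Fin n) (j : Fin k) :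
    t ≤ P.orderEmbOfFin h j ↔ k - Nc t P ≤ (j : ℕ) := by
  have hup : ∀ ⦃a b : Fin k⦄,
      a ∈ (Finset.univ.filter fun j : Fin k => t ≤ P.orderEmbOfFin h j) → a ≤ b →
      b ∈ (Finset.univ.filter fun j : Fin k => t ≤ P.orderEmbOfFin h j) := by
    intro a b ha hab
    simp only [Finset.mem_filter, Finset.mem_univ, true_and] at ha ⊢
    exact le_trans ha ((P.orderEmbOfFin h).monotone hab)
  have := upset_mem_iff _ hup j
  rw [card_filter_le_orderEmbOfFin] at this
  simpa using this

lemma Nc_le_card {n : ℕ} (t : Fin n) (P : Finset (Fin n)) : Nc t P ≤ P.card :=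
  Finset.card_le_card (Finset.filter_subset _ _)

lemma sort_get_eq {n k : ℕ} (P : Finset (Fin n)) (hP : P.card = k) (i : ℕ)
    (hx : i < (P.sort (· ≤ ·)).length) :
    (P.sort (· ≤ ·)).get ⟨i, hx⟩
      = P.orderEmbOfFin hP ⟨i, by rwa [Finset.length_sort, hP] at hx⟩ := by
  rw [Finset.orderEmbOfFin_apply]
  simp [List.get_eq_getElem]

lemma galeLE_iff_Nc {n k : ℕ} {P Q : Finset (Fin n)} (hP : P.card = k) (hQ : Q.card = k) :
    GaleLE P Q ↔ ∀ t, Nc t P ≤ Nc t Q := by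
  constructor
  · intro hG t
    rw [← card_filter_le_orderEmbOfFin P hP t, ← card_filter_le_orderEmbOfFin Q hQ t]
    apply Finset.card_le_card
    intro j hj
    simp only [Finset.mem_filter, Finset.mem_univ, true_and] at hj ⊢
    refine le_trans hj ?_
    have h1 : (j : ℕ) < (P.sort (· ≤ ·)).length := by rw [Finset.length_sort, hP]; exact j.2
    have h2 : (j : ℕ) < (Q.sort (· ≤ ·)).length := by rw [Finset.length_sort, hQ]; exact j.2
    have := hG j h1 h2
    rw [sort_get_eq P hP _ h1, sort_get_eq Q hQ _ h2] at this
    simpa using this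
  · intro hN i hx hy
    have hik : i < k := by rwa [Finset.length_sort, hP] at hx
    rw [sort_get_eq P hP i hx, sort_get_eq Q hQ i hy]
    set t := P.orderEmbOfFin hP ⟨i, hik⟩ with ht
    rw [le_orderEmbOfFin_iff]
    have h1 : k - Nc t P ≤ i := by
      have := (le_orderEmbOfFin_iff P hP t ⟨i, hik⟩).mp ht.le
      simpa using this
    have h2 := hN t
    show k - Nc t Q ≤ i
    omega

lemma galeLE_antisymm {n : ℕ} {P Q : Finset (Fin n)} (hc : P.card = Q.card)
    (h1 : GaleLE P Q) (h2 : GaleLE Q P) : P = Q := by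
  have hl : P.sort (· ≤ ·) = Q.sort (· ≤ ·) := by
    apply List.ext_get (by simp [Finset.length_sort, hc])
    intro i h h'
    exact le_antisymm (h1 i h h') (h2 i h' h)
  have := congrArg List.toFinset hl
  rwa [Finset.sort_toFinset, Finset.sort_toFinset] at this

lemma Pset_zero {n k : ℕ} (y : Fin k → Fin n) : Pset y 0 = ∅ := by
  simp [Pset]

lemma card_filter_lt_val (k i : ℕ) (h : i ≤ k) :
    (Finset.univ.filter fun j : Fin k => (j : ℕ) < i).card = i := by
  have h2 : (Finset.univ.filter fun j : Fin k => (j : ℕ) < i)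
      = Finset.univ \ (Finset.univ.filter fun j : Fin k => i ≤ (j : ℕ)) := by
    ext j
    simp only [Finset.mem_filter, Finset.mem_univ, true_and, Finset.mem_sdiff]
    omega
  rw [h2, Finset.card_sdiff_of_subset (Finset.filter_subset _ _), card_filter_le_val]
  simp only [Finset.card_univ, Fintype.card_fin]
  omega

lemma Pset_card {n k : ℕ} {y : Fin k → Fin n} (hy : Function.Injective y) {i : ℕ} (hik : i ≤ k) :
    (Pset y i).card = i := by
  rw [Pset, Finset.card_image_of_injective _ hy, card_filter_lt_val k i hik]

lemma Pset_top {n k : ℕ} (y : Fin k → Fin n) : Pset y k = Finset.image y Finset.univ := by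
  unfold Pset
  congr 1
  ext j
  simp [j.2]

lemma Pset_subset {n k : ℕ} (y : Fin k → Fin n) (i : ℕ) :
    Pset y i ⊆ Finset.image y Finset.univ := by
  intro x hx
  simp only [Pset, Finset.mem_image, Finset.mem_filter, Finset.mem_univ, true_and] at hx ⊢
  obtain ⟨j, _, rfl⟩ := hx
  exact ⟨j, rfl⟩

-- E1
lemma Nc_Pset_le {n k : ℕ} {y : Fin k → Fin n} (hy : Function.Injective y) (t : Fin n)
    {i : ℕ} (hik : i ≤ k) :
    Nc t (Pset y i) ≤ min i (Nc t (Finset.image y Finset.univ)) := by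
  apply le_min
  · calc Nc t (Pset y i) ≤ (Pset y i).card := Nc_le_card _ _
      _ = i := Pset_card hy hik
  · exact Finset.card_le_card (Finset.filter_subset_filter _ (Pset_subset y i))

/-- decreasing arrangement of a `k`-set -/
def decr {n k : ℕ} (C : Finset (Fin n)) (hC : C.card = k) : Fin k → Fin n :=
  fun i => C.orderEmbOfFin hC ⟨k - 1 - (i : ℕ), by have := i.2; omega⟩

lemma decr_injective {n k : ℕ} (C : Finset (Fin n)) (hC : C.card = k) :
    Function.Injective (decr C hC) := by
  intro i j h
  have := (C.orderEmbOfFin hC).injective h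
  have hv : k - 1 - (i : ℕ) = k - 1 - (j : ℕ) := congrArg Fin.val this
  have hi := i.2; have hj := j.2
  exact Fin.ext (by omega)

lemma decr_image {n k : ℕ} (C : Finset (Fin n)) (hC : C.card = k) :
    Finset.image (decr C hC) Finset.univ = C := by
  apply Finset.eq_of_subset_of_card_le
  · intro x hx
    simp only [Finset.mem_image, Finset.mem_univ, true_and] at hx
    obtain ⟨j, rfl⟩ := hx
    exact Finset.orderEmbOfFin_mem _ _ _
  · rw [Finset.card_image_of_injective _ (decr_injective C hC), Finset.card_univ,
      Fintype.card_fin, hC]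

lemma image_orderEmbOfFin {n k : ℕ} (A : Finset (Fin n)) (h : A.card = k) :
    Finset.image (fun i => A.orderEmbOfFin h i) Finset.univ = A := by
  apply Finset.eq_of_subset_of_card_le
  · intro x hx
    simp only [Finset.mem_image, Finset.mem_univ, true_and] at hx
    obtain ⟨j, rfl⟩ := hx
    exact Finset.orderEmbOfFin_mem _ _ _
  · rw [Finset.card_image_of_injective _ (A.orderEmbOfFin h).injective, Finset.card_univ,
      Fintype.card_fin, h]

lemma Pset_decr {n k : ℕ} (C : Finset (Fin n)) (hC : C.card = k) (i : ℕ) :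
    Pset (decr C hC) i
      = (Finset.univ.filter fun j : Fin k => k - i ≤ (j : ℕ)).image
          (fun j => C.orderEmbOfFin hC j) := by
  ext x
  simp only [Pset, Finset.mem_image, Finset.mem_filter, Finset.mem_univ, true_and]
  constructor
  · rintro ⟨j, hj, rfl⟩
    have hj2 := j.2
    exact ⟨⟨k - 1 - (j : ℕ), by omega⟩, by simp; omega, rfl⟩
  · rintro ⟨j, hj, rfl⟩
    have hj2 := j.2
    refine ⟨⟨k - 1 - (j : ℕ), by omega⟩, by simp; omega, ?_⟩
    unfold decr
    congr 1
    exact Fin.ext (by simp; omega)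

-- E2
lemma Nc_Pset_decr {n k : ℕ} (C : Finset (Fin n)) (hC : C.card = k) (t : Fin n)
    {i : ℕ} (hik : i ≤ k) :
    Nc t (Pset (decr C hC) i) = min i (Nc t C) := by
  rw [Nc, Pset_decr, Finset.filter_image]
  rw [Finset.card_image_of_injective _ (C.orderEmbOfFin hC).injective]
  have hNc : Nc t C ≤ k := by have := Nc_le_card t C; omega
  have heq : ((Finset.univ.filter fun j : Fin k => k - i ≤ (j : ℕ)).filter
        fun j => t ≤ C.orderEmbOfFin hC j)
      = Finset.univ.filter fun j : Fin k => max (k - i) (k - Nc t C) ≤ (j : ℕ) := by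
    ext j
    simp only [Finset.mem_filter, Finset.mem_univ, true_and,
      le_orderEmbOfFin_iff C hC t j]
    omega
  rw [heq, card_filter_le_val]
  omega

lemma tuple_eq_of_Pset_eq {n k : ℕ} {x y : Fin k → Fin n}
    (hx : Function.Injective x) (hy : Function.Injective y)
    (h : ∀ i, 1 ≤ i → i ≤ k → Pset x i = Pset y i) : x = y := by
  have h' : ∀ i, i ≤ k → Pset x i = Pset y i := by
    intro i hik
    rcases Nat.eq_zero_or_pos i with h0 | h1
    · rw [h0, Pset_zero, Pset_zero]
    · exact h i h1 hik
  funext j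
  have hj2 := j.2
  have hmem : x j ∈ Pset y ((j : ℕ) + 1) := by
    rw [← h' _ (by omega)]
    simp only [Pset, Finset.mem_image, Finset.mem_filter, Finset.mem_univ, true_and]
    exact ⟨j, by omega, rfl⟩
  have hnmem : x j ∉ Pset y (j : ℕ) := by
    rw [← h' _ (by omega)]
    simp only [Pset, Finset.mem_image, Finset.mem_filter, Finset.mem_univ, true_and]
    rintro ⟨j', hj', hjx⟩
    have := hx hjx
    omega
  simp only [Pset, Finset.mem_image, Finset.mem_filter, Finset.mem_univ, true_and] at hmem hnmem
  obtain ⟨j', hj', hjx⟩ := hmem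
  have : (j' : ℕ) = (j : ℕ) := by
    by_contra hne
    exact hnmem ⟨j', by omega, hjx⟩
  rw [← hjx]
  congr 1
  exact Fin.ext this

/-- Gale maximum property for a permutation `w`. -/
def GMax {n : ℕ} (X : Set (Finset (Fin n))) (w : Equiv.Perm (Fin n)) : Prop :=
  ∃ B ∈ X, ∀ A ∈ X, ∀ t, Nc t (A.image w) ≤ Nc t (B.image w)

lemma Nc_image {n : ℕ} (w : Equiv.Perm (Fin n)) (A : Finset (Fin n)) (t : Fin n) :
    Nc t (A.image w) = (A.filter fun x => t ≤ w x).card := by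
  classical
  rw [Nc, Finset.filter_image, Finset.card_image_of_injective _ w.injective]

lemma exchange_to_gmax {n k : ℕ} {X : Set (Finset (Fin n))}
    (hX : ∀ x ∈ X, x.card = k) (hne : X.Nonempty) (hE : ExchangeProp X)
    (w : Equiv.Perm (Fin n)) : GMax X w := by
  classical
  set f : Fin n → ℕ := fun x => 2 ^ ((w x : ℕ)) with hf
  have hfmono : ∀ x y : Fin n, w x < w y → f x < f y := by
    intro x y h
    exact Nat.pow_lt_pow_right (by norm_num) (by exact_mod_cast h)
  obtain ⟨B, hBX, hBmax⟩ := X.toFinite.toFinset.exists_max_image (fun A => A.sum f)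
    (by simpa [Set.Finite.toFinset] using hne)
  rw [Set.Finite.mem_toFinset] at hBX
  have hBmax' : ∀ A ∈ X, A.sum f ≤ B.sum f := by
    intro A hA
    exact hBmax A (by rwa [Set.Finite.mem_toFinset])
  refine ⟨B, hBX, ?_⟩
  have key : ∀ d, ∀ A ∈ X, (A \ B).card ≤ d → ∀ t : Fin n,
      (A.filter fun x => t ≤ w x).card ≤ (B.filter fun x => t ≤ w x).card := by
    intro d
    induction d with
    | zero =>
      intro A hA hcard t
      have : A = B := by
        have hsub : A ⊆ B := by
          rw [← Finset.sdiff_eq_empty_iff_subset]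
          exact Finset.card_eq_zero.mp (Nat.le_zero.mp hcard)
        exact Finset.eq_of_subset_of_card_le hsub (by rw [hX A hA, hX B hBX])
      rw [this]
    | succ d ih =>
      intro A hA hcard t
      by_cases hAB : A \ B = ∅
      · have hsub : A ⊆ B := Finset.sdiff_eq_empty_iff_subset.mp hAB
        have : A = B := Finset.eq_of_subset_of_card_le hsub (by rw [hX A hA, hX B hBX])
        rw [this]
      · by_cases hlow : ∃ a ∈ A \ B, ¬ t ≤ w a
        · obtain ⟨a, ha, hat⟩ := hlow
          obtain ⟨b, hb, hA'⟩ := hE A hA B hBX a ha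
          set A' := (A \ {a}) ∪ {b} with hA'def
          have hbB : b ∈ B := (Finset.mem_sdiff.mp hb).1
          have haA : a ∈ A := (Finset.mem_sdiff.mp ha).1
          have hd : (A' \ B).card ≤ d := by
            have hsub : A' \ B ⊆ (A \ B).erase a := by
              intro x hx
              simp only [hA'def, Finset.mem_sdiff, Finset.mem_union, Finset.mem_singleton,
                Finset.mem_erase] at hx ⊢
              rcases hx with ⟨hx1 | hx2, hxB⟩
              · exact ⟨hx1.2, hx1.1, hxB⟩
              · exact absurd (hx2 ▸ hbB) hxB
            have h1 := Finset.card_le_card hsub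
            have h2 : ((A \ B).erase a).card = (A \ B).card - 1 :=
              Finset.card_erase_of_mem ha
            have h3 : 1 ≤ (A \ B).card := Finset.card_pos.mpr ⟨a, ha⟩
            omega
          have hsubf : (A.filter fun x => t ≤ w x) ⊆ (A'.filter fun x => t ≤ w x) := by
            intro x hx
            simp only [Finset.mem_filter] at hx ⊢
            refine ⟨?_, hx.2⟩
            simp only [hA'def, Finset.mem_union, Finset.mem_sdiff, Finset.mem_singleton]
            left
            refine ⟨hx.1, ?_⟩
            rintro rfl
            exact hat hx.2
          calc (A.filter fun x => t ≤ w x).card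
              ≤ (A'.filter fun x => t ≤ w x).card := Finset.card_le_card hsubf
            _ ≤ (B.filter fun x => t ≤ w x).card := ih A' hA' hd t
        · push_neg at hlow
          by_contra hgt
          push_neg at hgt
          -- derive existence of a low element of B \ A
          have hex : ∃ b ∈ B \ A, ¬ t ≤ w b := by
            by_contra hall
            push_neg at hall
            have hcards : (A \ B).card = (B \ A).card := by
              have e1 := Finset.card_sdiff_add_card_inter A B
              have e2 := Finset.card_sdiff_add_card_inter B A
              have e3 : (A ∩ B).card = (B ∩ A).card := by rw [Finset.inter_comm]
              have e4 : A.card = B.card := by rw [hX A hA, hX B hBX]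
              omega
            have hup : (A.filter fun x => t ≤ w x)
                ⊆ ((A ∩ B).filter fun x => t ≤ w x) ∪ (A \ B) := by
              intro x hx
              simp only [Finset.mem_filter, Finset.mem_union, Finset.mem_inter,
                Finset.mem_sdiff] at hx ⊢
              by_cases hxB : x ∈ B
              · exact Or.inl ⟨⟨hx.1, hxB⟩, hx.2⟩
              · exact Or.inr ⟨hx.1, hxB⟩
            have hdown : ((A ∩ B).filter fun x => t ≤ w x) ∪ (B \ A)
                ⊆ (B.filter fun x => t ≤ w x) := by
              intro x hx
              simp only [Finset.mem_filter, Finset.mem_union, Finset.mem_inter,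
                Finset.mem_sdiff] at hx ⊢
              rcases hx with ⟨⟨_, hxB⟩, hxt⟩ | hx2
              · exact ⟨hxB, hxt⟩
              · exact ⟨hx2.1, hall x (Finset.mem_sdiff.mpr hx2)⟩
            have hdisj1 : Disjoint ((A ∩ B).filter fun x => t ≤ w x) (B \ A) := by
              apply Finset.disjoint_left.mpr
              intro x hx hx2
              simp only [Finset.mem_filter, Finset.mem_inter] at hx
              exact (Finset.mem_sdiff.mp hx2).2 hx.1.1
            have h1 := Finset.card_le_card hup
            have h2 := Finset.card_le_card hdown
            rw [Finset.card_union_of_disjoint hdisj1] at h2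
            have h3 := Finset.card_union_le ((A ∩ B).filter fun x => t ≤ w x) (A \ B)
            omega
          obtain ⟨b, hbBA, hbt⟩ := hex
          obtain ⟨a, haAB, hB'⟩ := hE B hBX A hA b hbBA
          have haA : a ∈ A := (Finset.mem_sdiff.mp haAB).1
          have haB : a ∉ B := (Finset.mem_sdiff.mp haAB).2
          have hbB : b ∈ B := (Finset.mem_sdiff.mp hbBA).1
          have hwlt : w b < w a := lt_of_lt_of_le (not_le.mp hbt) (hlow a haAB)
          have hflt : f b < f a := hfmono b a hwlt
          have hBeq : (B \ {b}) ∪ {a} = insert a (B.erase b) := by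
            rw [Finset.sdiff_singleton_eq_erase]
            ext x
            simp [or_comm]
          have hsum : ((B \ {b}) ∪ {a}).sum f = f a + (B.erase b).sum f := by
            rw [hBeq, Finset.sum_insert (by simp [haB, Finset.mem_erase])]
          have hsumB : B.sum f = f b + (B.erase b).sum f := (Finset.add_sum_erase B f hbB).symm
          have := hBmax' _ hB'
          rw [hsum, hsumB] at this
          omega
  intro A hA t
  rw [Nc_image, Nc_image]
  exact key (A \ B).card A hA le_rfl t

lemma image_comp_perm {n k : ℕ} (w : Equiv.Perm (Fin n)) (y : Fin k → Fin n) :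
    Finset.image (⇑w ∘ y) Finset.univ = (Finset.image y Finset.univ).image w := by
  rw [Finset.image_image]

lemma gmax_to_coxeter {n k : ℕ} {X : Set (Finset (Fin n))}
    (hX : ∀ x ∈ X, x.card = k) (hg : ∀ w : Equiv.Perm (Fin n), GMax X w) :
    IsCoxeterMatroid (Bary k X) := by
  intro w
  obtain ⟨B, hB, hmax⟩ := hg w
  have hBk : B.card = k := hX B hB
  have hCk : (B.image w).card = k := by
    rw [Finset.card_image_of_injective _ w.injective, hBk]
  set m : Fin k → Fin n := decr (B.image w) hCk with hm
  have hminj : Function.Injective m := decr_injective _ _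
  have hmimg : Finset.image m Finset.univ = B.image w := decr_image _ _
  have hmmem : m ∈ (fun y => ⇑w ∘ y) '' Bary k X := by
    refine ⟨⇑w.symm ∘ m, ⟨?_, ?_⟩, ?_⟩
    · exact w.symm.injective.comp hminj
    · rw [image_comp_perm w.symm m, hmimg, Finset.image_image]
      have : (⇑w.symm ∘ ⇑w) = id := by funext x; simp
      rwa [this, Finset.image_id]
    · funext i; simp
  have hdom : ∀ z ∈ (fun y => ⇑w ∘ y) '' Bary k X, BruhatLE z m := by
    rintro z ⟨y, ⟨hyinj, hyX⟩, rfl⟩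
    set A := Finset.image y Finset.univ with hA
    have hzinj : Function.Injective (⇑w ∘ y) := w.injective.comp hyinj
    have hAk : (A.image w).card = k := by
      rw [Finset.card_image_of_injective _ w.injective, hX A hyX]
    intro i h1 hik
    rw [galeLE_iff_Nc (Pset_card hzinj hik) (Pset_card hminj hik)]
    intro t
    have e1 := Nc_Pset_le hzinj t hik
    rw [image_comp_perm w y, ← hA] at e1
    have e2 : Nc t (Pset m i) = min i (Nc t (B.image w)) := Nc_Pset_decr _ _ t hik
    have e3 := hmax A hyX t
    rw [e2]
    omega
  refine ⟨m, ⟨hmmem, hdom⟩, ?_⟩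
  rintro m' ⟨hm'mem, hm'dom⟩
  have h1 : BruhatLE m' m := hdom m' hm'mem
  have h2 : BruhatLE m m' := hm'dom m hmmem
  obtain ⟨y', ⟨hy'inj, _⟩, rfl⟩ := hm'mem
  have hm'inj : Function.Injective (⇑w ∘ y') := w.injective.comp hy'inj
  apply tuple_eq_of_Pset_eq hm'inj hminj
  intro i hi1 hik
  exact galeLE_antisymm
    (by rw [Pset_card hm'inj hik, Pset_card hminj hik]) (h1 i hi1 hik) (h2 i hi1 hik)

lemma coxeter_to_gmax {n k : ℕ} {X : Set (Finset (Fin n))}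
    (hX : ∀ x ∈ X, x.card = k) (hC : IsCoxeterMatroid (Bary k X))
    (w : Equiv.Perm (Fin n)) : GMax X w := by
  obtain ⟨m, ⟨hmmem, hdom⟩, _⟩ := hC w
  obtain ⟨y₀, ⟨hy₀inj, hy₀X⟩, rfl⟩ := hmmem
  set B := Finset.image y₀ Finset.univ with hB
  refine ⟨B, hy₀X, ?_⟩
  intro A hA t
  rcases Nat.eq_zero_or_pos k with hk0 | hk1
  · have hA0 : A = ∅ := Finset.card_eq_zero.mp (by rw [hX A hA, hk0])
    have hB0 : B = ∅ := Finset.card_eq_zero.mp (by rw [hX B hy₀X, hk0])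
    rw [hA0, hB0]
  · have hAk := hX A hA
    set yA : Fin k → Fin n := fun i => A.orderEmbOfFin hAk i with hyA
    have hyAinj : Function.Injective yA := (A.orderEmbOfFin hAk).injective
    have hyAimg : Finset.image yA Finset.univ = A := image_orderEmbOfFin A hAk
    have hmem : ⇑w ∘ yA ∈ (fun y => ⇑w ∘ y) '' Bary k X :=
      ⟨yA, ⟨hyAinj, by rw [hyAimg]; exact hA⟩, rfl⟩
    have hbr := hdom _ hmem k hk1 le_rfl
    rw [Pset_top, Pset_top, image_comp_perm, image_comp_perm, hyAimg, ← hB] at hbr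
    have hAc : (A.image w).card = k := by
      rw [Finset.card_image_of_injective _ w.injective, hAk]
    have hBc : (B.image w).card = k := by
      rw [Finset.card_image_of_injective _ w.injective, hX B hy₀X]
    exact (galeLE_iff_Nc hAc hBc).mp hbr t

lemma coxeter_to_exchange {n k : ℕ} {X : Set (Finset (Fin n))}
    (hX : ∀ x ∈ X, x.card = k) (hC : IsCoxeterMatroid (Bary k X)) :
    ExchangeProp X := by
  classical
  intro A hA B hB a ha
  have haA : a ∈ A := (Finset.mem_sdiff.mp ha).1
  have haB : a ∉ B := (Finset.mem_sdiff.mp ha).2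
  set c : Fin n → ℕ := fun x =>
    if x ∈ A ∩ B then 4 else if x ∈ A ∧ x ≠ a then 3 else if x ∈ B then 2 else
      if x = a then 1 else 0 with hc
  have hc4 : ∀ x, 4 ≤ c x ↔ x ∈ A ∩ B := by
    intro x; simp only [hc]; split_ifs with h1 h2 h3 h4 <;> simp [h1]
  have hc3 : ∀ x, 3 ≤ c x ↔ x ∈ A ∧ x ≠ a := by
    intro x; simp only [hc]; split_ifs with h1 h2 h3 h4
    · exact iff_of_true (by norm_num)
        ⟨(Finset.mem_inter.mp h1).1, fun he => haB (he ▸ (Finset.mem_inter.mp h1).2)⟩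
    · exact iff_of_true (by norm_num) h2
    · exact iff_of_false (by norm_num) h2
    · exact iff_of_false (by norm_num) h2
    · exact iff_of_false (by norm_num) h2
  have hc2 : ∀ x, 2 ≤ c x ↔ ((x ∈ A ∧ x ≠ a) ∨ x ∈ B) := by
    intro x; simp only [hc]; split_ifs with h1 h2 h3 h4
    · exact iff_of_true (by norm_num) (Or.inr (Finset.mem_inter.mp h1).2)
    · exact iff_of_true (by norm_num) (Or.inl h2)
    · exact iff_of_true (by norm_num) (Or.inr h3)
    · exact iff_of_false (by norm_num) (by rintro (h | h); exacts [h2 h, h3 h])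
    · exact iff_of_false (by norm_num) (by rintro (h | h); exacts [h2 h, h3 h])
  set g : Fin n → ℕ := fun x => c x * n + (x : ℕ) with hg
  have hgmono : ∀ x y : Fin n, c x < c y → g x < g y := by
    intro x y h
    have hx := x.2
    simp only [hg]
    calc c x * n + (x : ℕ) < c x * n + n := by omega
      _ = (c x + 1) * n := by ring
      _ ≤ c y * n := Nat.mul_le_mul (by omega) (le_refl n)
      _ ≤ c y * n + (y : ℕ) := Nat.le_add_right _ _
  have hginj : Function.Injective g := by
    intro x y h
    rcases lt_trichotomy (c x) (c y) with h1 | h1 | h1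
    · exact absurd h (Nat.ne_of_lt (hgmono x y h1))
    · have hx := x.2; have hy := y.2
      simp only [hg] at h
      rw [h1] at h
      exact Fin.ext (by omega)
    · exact absurd h.symm (Nat.ne_of_lt (hgmono y x h1))
  set σ := Tuple.sort g with hσ
  have hstrict : StrictMono (g ∘ σ) :=
    (Tuple.monotone_sort g).strictMono_of_injective (hginj.comp σ.injective)
  set w : Equiv.Perm (Fin n) := σ⁻¹ with hw
  have hgw : ∀ x : Fin n, g (σ (w x)) = g x := by
    intro x; simp [hw]
  have hkey : ∀ x y : Fin n, w x ≤ w y ↔ g x ≤ g y := by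
    intro x y
    rw [← hgw x, ← hgw y]
    exact ⟨fun h => hstrict.monotone h, fun h => (hstrict.le_iff_le).mp h⟩
  have hup : ∀ (v : ℕ) (x y : Fin n), w x ≤ w y → v ≤ c x → v ≤ c y := by
    intro v x y hxy hvx
    by_contra hvy
    have hcy : c y < c x := by omega
    have := hgmono y x hcy
    have := (hkey x y).mp hxy
    omega
  obtain ⟨M, hM, hmax⟩ := coxeter_to_gmax hX hC w
  have hblock : ∀ (v : ℕ), ∀ S ∈ X,
      (S.filter fun x => v ≤ c x).card ≤ (M.filter fun x => v ≤ c x).card := by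
    intro v S hS
    by_cases hT : (Finset.univ.filter fun x : Fin n => v ≤ c x) = ∅
    · have h0 : ∀ x : Fin n, ¬ v ≤ c x := by
        intro x hx
        exact absurd (Finset.mem_filter.mpr ⟨Finset.mem_univ x, hx⟩) (by rw [hT]; simp)
      have : (S.filter fun x => v ≤ c x) = ∅ := by
        apply Finset.filter_eq_empty_iff.mpr; intro x _; exact h0 x
      simp [this]
    · have hTne : (Finset.univ.filter fun x : Fin n => v ≤ c x).Nonempty :=
        Finset.nonempty_iff_ne_empty.mpr hT
      set Tv := Finset.univ.filter fun x : Fin n => v ≤ c x with hTv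
      have hTim : (Tv.image w).Nonempty := hTne.image _
      set t := (Tv.image w).min' hTim with htdef
      obtain ⟨x₀, hx₀T, hx₀⟩ := Finset.mem_image.mp ((Tv.image w).min'_mem hTim)
      have hchar : ∀ x : Fin n, v ≤ c x ↔ t ≤ w x := by
        intro x
        constructor
        · intro hx
          exact (Tv.image w).min'_le _ (Finset.mem_image_of_mem w
            (Finset.mem_filter.mpr ⟨Finset.mem_univ x, hx⟩))
        · intro htx
          have hx₀c : v ≤ c x₀ := (Finset.mem_filter.mp hx₀T).2
          exact hup v x₀ x (by rw [hx₀]; exact htx) hx₀c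
      have e1 : (S.filter fun x => v ≤ c x) = (S.filter fun x => t ≤ w x) :=
        Finset.filter_congr (fun x _ => by rw [hchar x])
      have e2 : (M.filter fun x => v ≤ c x) = (M.filter fun x => t ≤ w x) :=
        Finset.filter_congr (fun x _ => by rw [hchar x])
      rw [e1, e2, ← Nc_image, ← Nc_image]
      exact hmax S hS t
  have hMk : M.card = k := hX M hM
  have hAk : A.card = k := hX A hA
  have hBk : B.card = k := hX B hB
  -- block value facts
  -- step 1 : A ∩ B ⊆ M  (not needed separately; step 2 suffices)
  -- step 2 : A.erase a ⊆ M
  have hstep2 : A.erase a ⊆ M := by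
    have e1 : (A.filter fun x => 3 ≤ c x) = A.erase a := by
      ext x
      simp only [Finset.mem_filter, Finset.mem_erase, hc3]
      tauto
    have e2 : (M.filter fun x => 3 ≤ c x) ⊆ A.erase a := by
      intro x hx
      have := (Finset.mem_filter.mp hx).2
      rw [hc3] at this
      exact Finset.mem_erase.mpr ⟨this.2, this.1⟩
    have h1 := hblock 3 A hA
    rw [e1] at h1
    have heq : (M.filter fun x => 3 ≤ c x) = A.erase a :=
      Finset.eq_of_subset_of_card_le e2 (le_trans h1 (le_refl _))
    rw [← heq]
    exact Finset.filter_subset _ _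
  -- step 3 : every element of M has c ≥ 2
  have hstep3 : ∀ x ∈ M, 2 ≤ c x := by
    have e1 : (B.filter fun x => 2 ≤ c x) = B := by
      apply Finset.filter_true_of_mem
      intro x hx
      rw [hc2]
      exact Or.inr hx
    have h1 := hblock 2 B hB
    rw [e1, hBk] at h1
    have h2 : (M.filter fun x => 2 ≤ c x).card ≤ k := by
      rw [← hMk]; exact Finset.card_le_card (Finset.filter_subset _ _)
    have heq : (M.filter fun x => 2 ≤ c x) = M :=
      Finset.eq_of_subset_of_card_le (Finset.filter_subset _ _) (by omega)
    intro x hx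
    rw [← heq] at hx
    exact (Finset.mem_filter.mp hx).2
  -- extract b
  have hcard1 : (M \ A.erase a).card = 1 := by
    rw [Finset.card_sdiff_of_subset hstep2, hMk, Finset.card_erase_of_mem haA, hAk]
    have : 1 ≤ k := by
      rw [← hAk]; exact Finset.card_pos.mpr ⟨a, haA⟩
    omega
  obtain ⟨b, hbeq⟩ := Finset.card_eq_one.mp hcard1
  have hbM : b ∈ M := (Finset.mem_sdiff.mp (hbeq ▸ Finset.mem_singleton_self b)).1
  have hbnA : b ∉ A.erase a := (Finset.mem_sdiff.mp (hbeq ▸ Finset.mem_singleton_self b)).2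
  have hbc : 2 ≤ c b := hstep3 b hbM
  have hbB : b ∈ B := by
    rcases (hc2 b).mp hbc with h1 | h1
    · exact absurd (Finset.mem_erase.mpr ⟨h1.2, h1.1⟩) hbnA
    · exact h1
  have hbnA' : b ∉ A := by
    intro hbA
    by_cases hba : b = a
    · rw [hba] at hbB; exact haB hbB
    · exact hbnA (Finset.mem_erase.mpr ⟨hba, hbA⟩)
  refine ⟨b, Finset.mem_sdiff.mpr ⟨hbB, hbnA'⟩, ?_⟩
  have hMeq : (A \ {a}) ∪ {b} = M := by
    rw [Finset.sdiff_singleton_eq_erase]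
    apply Finset.eq_of_subset_of_card_le
    · intro x hx
      rcases Finset.mem_union.mp hx with h1 | h1
      · exact hstep2 h1
      · rw [Finset.mem_singleton.mp h1]; exact hbM
    · rw [hMk]
      have hdisj : Disjoint (A.erase a) {b} :=
        Finset.disjoint_singleton_right.mpr hbnA
      rw [Finset.card_union_of_disjoint hdisj, Finset.card_erase_of_mem haA, hAk,
        Finset.card_singleton]
      have : 1 ≤ k := by rw [← hAk]; exact Finset.card_pos.mpr ⟨a, haA⟩
      omega
  rw [hMeq]
  exact hM


end Aux

/-- A nonempty collection `X` of `k`-subsets of `[n]` is a matroid if and only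
if its barycentric subdivision `𝓑(X)` is a Coxeter matroid in the parabolic
quotient `S_n^{[n-1]∖[k]}`. -/
theorem matroid_iff_bary_coxeterMatroid
    (n k : ℕ) (hk : k ≤ n) (X : Set (Finset (Fin n)))
    (hne : X.Nonempty) (hX : ∀ x ∈ X, x.card = k) :
    ExchangeProp X ↔ IsCoxeterMatroid (Bary k X) := by
  constructor
  · intro hE
    exact gmax_to_coxeter hX (fun w => exchange_to_gmax hX hne hE w)
  · intro hC
    exact coxeter_to_exchange hX hC
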